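/- Under the BBvD hypothesis, if the extended map δ̂: Hom_k(Λ*Φ, Ξ) → Hom(Λ*Φ, Φ) is injective, then the bracket [π₁,π₂] = π₁⊙δ̂(π₂) − π₂⊙δ̂(π₁) + Ĉ(π₁,π₂) on Hom_k(Λ*Φ,Ξ) satisfies the Jacobi identity, making Hom_k(Λ*Φ, Ξ) a Lie algebra. -/

import Mathlib

open TensorProduct

noncomputable section

/-- A *coderivation* on a coalgebra `(C, Δ)`: `Δ ∘ Θ = (Θ ⊗ 1 + 1 ⊗ Θ) ∘ Δ`. -/
def IsCoderivation {A C : Type*} [CommRing A] [AddCommGroup C] [Module A C]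
    (Δ : C →ₗ[A] C ⊗[A] C) (Θ : C →ₗ[A] C) : Prop :=
  Δ ∘ₗ Θ = (LinearMap.rTensor C Θ + LinearMap.lTensor C Θ) ∘ₗ Δ

/-- An axiomatization of the cofree nilpotent (graded co)commutative coalgebra `Λ*Φ`
cogenerated by `Φ`, together with its wedge product `m`, unit `one`, counit `ε`,
inclusion `ι` of the cogenerators and projection `p` onto the cogenerators.
The field `cofree_coder` expresses cofreeness: a coderivation is determined by its
corestriction to the cogenerators. -/
structure WedgeBialgebra (A : Type*) (Φ : Type*) (C : Type*) [CommRing A]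
    [AddCommGroup Φ] [Module A Φ] [AddCommGroup C] [Module A C] where
  Δ : C →ₗ[A] C ⊗[A] C
  ε : C →ₗ[A] A
  m : C ⊗[A] C →ₗ[A] C
  one : C
  ι : Φ →ₗ[A] C
  p : C →ₗ[A] Φ
  coassoc : (TensorProduct.assoc A C C C).toLinearMap ∘ₗ (LinearMap.rTensor C Δ) ∘ₗ Δ
      = (LinearMap.lTensor C Δ) ∘ₗ Δ
  cocomm : (TensorProduct.comm A C C).toLinearMap ∘ₗ Δ = Δ
  counit_left : ∀ x : C, (TensorProduct.lid A C) ((LinearMap.rTensor C ε) (Δ x)) = x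
  counit_right : ∀ x : C, (TensorProduct.rid A C) ((LinearMap.lTensor C ε) (Δ x)) = x
  mul_compat : Δ ∘ₗ m = (TensorProduct.map m m) ∘ₗ
      (TensorProduct.tensorTensorTensorComm A C C C C).toLinearMap ∘ₗ (TensorProduct.map Δ Δ)
  one_mul : ∀ x : C, m (one ⊗ₜ x) = x
  mul_one : ∀ x : C, m (x ⊗ₜ one) = x
  mul_assoc : ∀ x y z : C, m (m (x ⊗ₜ y) ⊗ₜ z) = m (x ⊗ₜ m (y ⊗ₜ z))
  Δ_one : Δ one = one ⊗ₜ one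
  ε_one : ε one = 1
  ε_mul : ∀ x y : C, ε (m (x ⊗ₜ y)) = ε x * ε y
  Δ_ι : ∀ φ : Φ, Δ (ι φ) = ι φ ⊗ₜ one + one ⊗ₜ ι φ
  ε_ι : ∀ φ : Φ, ε (ι φ) = 0
  p_ι : ∀ φ : Φ, p (ι φ) = φ
  p_one : p one = 0
  p_mul : ∀ x y : C, p (m (x ⊗ₜ y)) = ε x • p y + ε y • p x
  cofree_coder : ∀ Θ : C →ₗ[A] C, IsCoderivation Δ Θ → p ∘ₗ Θ = 0 → Θ = 0

namespace WedgeBialgebra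

variable {A Φ C : Type*} [CommRing A] [AddCommGroup Φ] [Module A Φ]
  [AddCommGroup C] [Module A C] (W : WedgeBialgebra A Φ C)

/-- The lift `h̄ = m ∘ (h ⊗ 1) ∘ Δ : Λ*Φ → Λ*Φ` of `h : Λ*Φ → Φ`. -/
def coderOf (h : C →ₗ[A] Φ) : C →ₗ[A] C :=
  W.m ∘ₗ (LinearMap.rTensor C (W.ι ∘ₗ h)) ∘ₗ W.Δ

/-- The Gerstenhaber comp operation `f ⊙ g = f ∘ ḡ`. -/
def gcomp (f g : C →ₗ[A] Φ) : C →ₗ[A] Φ := f ∘ₗ W.coderOf g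

/-- The Gerstenhaber bracket `[f,g] = f ∘ ḡ − g ∘ f̄` on `Hom(Λ*Φ, Φ)`. -/
def gbracket (f g : C →ₗ[A] Φ) : C →ₗ[A] Φ := W.gcomp f g - W.gcomp g f

end WedgeBialgebra

/-- The wedge word `φ₁ ∧ ⋯ ∧ φ_n ∈ Λ*Φ` of a family of elements of `Φ`. -/
noncomputable def WedgeBialgebra.wedgeFam {A Φ C : Type*} [CommRing A] [AddCommGroup Φ] [Module A Φ]
  [AddCommGroup C] [Module A C] (W : WedgeBialgebra A Φ C) : ∀ {n : ℕ}, (Fin n → Φ) → C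
  | 0, _ => W.one
  | _ + 1, φ => W.m (W.ι (φ 0) ⊗ₜ WedgeBialgebra.wedgeFam W fun i => φ i.succ)

namespace WedgeBialgebra

variable {A Φ C : Type*} [CommRing A] [AddCommGroup Φ] [Module A Φ]
  [AddCommGroup C] [Module A C] (W : WedgeBialgebra A Φ C)

section Parameters

variable {Ξ : Type*} [AddCommGroup Ξ] [Module A Ξ]

/-- A gauge parameter `ξ ∈ Ξ` viewed as the element of `Hom(Λ*Φ, Ξ)` supported on
the scalars, with value `ξ` at `1`. -/
def constPar (ξ : Ξ) : C →ₗ[A] Ξ := (LinearMap.toSpanSingleton A Ξ ξ) ∘ₗ W.ε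

/-- The extension `δ̂(π) = ev ∘ (δ∘π ⊗ 1) ∘ Δ` of `δ : Ξ → Hom(Λ*Φ,Φ)`
to `Hom(Λ*Φ, Ξ)`. -/
def deltaHat (δ : Ξ →ₗ[A] (C →ₗ[A] Φ)) (π : C →ₗ[A] Ξ) : C →ₗ[A] Φ :=
  (TensorProduct.lift (δ ∘ₗ π)) ∘ₗ W.Δ

/-- The extension `Ĉ(π₁,π₂) = C ∘ ((π₁⊗π₂)⊗1) ∘ (Δ⊗1) ∘ Δ` of the correction term
`C : Ξ ⊗ Ξ → Hom(Λ*Φ,Ξ)`. -/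
def cHat (Cm : Ξ →ₗ[A] Ξ →ₗ[A] (C →ₗ[A] Ξ)) (π₁ π₂ : C →ₗ[A] Ξ) : C →ₗ[A] Ξ :=
  (TensorProduct.lift (TensorProduct.lift ((Cm ∘ₗ π₁).compl₂ π₂))) ∘ₗ
    (LinearMap.rTensor C W.Δ) ∘ₗ W.Δ

/-- The corrected bracket `[π₁,π₂] = π₁⊙δ̂(π₂) − π₂⊙δ̂(π₁) + Ĉ(π₁,π₂)`
on `Hom(Λ*Φ, Ξ)`. -/
def parBracket (δ : Ξ →ₗ[A] (C →ₗ[A] Φ)) (Cm : Ξ →ₗ[A] Ξ →ₗ[A] (C →ₗ[A] Ξ))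
    (π₁ π₂ : C →ₗ[A] Ξ) : C →ₗ[A] Ξ :=
  π₁ ∘ₗ W.coderOf (W.deltaHat δ π₂) - π₂ ∘ₗ W.coderOf (W.deltaHat δ π₁) + W.cHat Cm π₁ π₂

end Parameters

end WedgeBialgebra

section AuxiliaryLemmas

open LinearMap TensorProduct

variable {A : Type*} [CommRing A]

/-- `lift h ∘ rTensor X = lift (h ∘ X)`. -/
lemma lift_comp_rT {M N P Q : Type*} [AddCommGroup M] [AddCommGroup N] [AddCommGroup P]
    [AddCommGroup Q] [Module A M] [Module A N] [Module A P] [Module A Q]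
    (h : M →ₗ[A] N →ₗ[A] P) (X : Q →ₗ[A] M) :
    TensorProduct.lift h ∘ₗ rTensor N X = TensorProduct.lift (h ∘ₗ X) := by
  apply TensorProduct.ext'
  intro q n
  simp

/-- `lift h ∘ lTensor X = lift (h.compl₂ X)`. -/
lemma lift_comp_lT {M N P Q : Type*} [AddCommGroup M] [AddCommGroup N] [AddCommGroup P]
    [AddCommGroup Q] [Module A M] [Module A N] [Module A P] [Module A Q]
    (h : M →ₗ[A] N →ₗ[A] P) (X : Q →ₗ[A] N) :
    TensorProduct.lift h ∘ₗ lTensor M X = TensorProduct.lift (h.compl₂ X) := by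
  apply TensorProduct.ext'
  intro m q
  simp

namespace WedgeBialgebra

variable {Φ C Ξ : Type*} [AddCommGroup Φ] [Module A Φ]
  [AddCommGroup C] [Module A C] [AddCommGroup Ξ] [Module A Ξ]
  (W : WedgeBialgebra A Φ C)

lemma coassoc_apply (x : C) :
    (TensorProduct.assoc A C C C) (rTensor C W.Δ (W.Δ x)) = lTensor C W.Δ (W.Δ x) := by
  simpa using LinearMap.congr_fun W.coassoc x

lemma coassoc_symm_apply (x : C) :
    rTensor C W.Δ (W.Δ x) = (TensorProduct.assoc A C C C).symm (lTensor C W.Δ (W.Δ x)) := by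
  rw [← W.coassoc_apply x]
  simp

lemma cocomm_apply (x : C) : (TensorProduct.comm A C C) (W.Δ x) = W.Δ x := by
  simpa using LinearMap.congr_fun W.cocomm x

lemma mul_compat_apply (t : C ⊗[A] C) :
    W.Δ (W.m t) = TensorProduct.map W.m W.m
      ((TensorProduct.tensorTensorTensorComm A C C C C) (TensorProduct.map W.Δ W.Δ t)) := by
  simpa using LinearMap.congr_fun W.mul_compat t

/-- Left multiplication by a cogenerator is a coderivation (pointwise form). -/
lemma Δ_mulι (φ : Φ) (y : C) :
    W.Δ (W.m (W.ι φ ⊗ₜ y)) =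
      (rTensor C (W.m ∘ₗ TensorProduct.mk A C C (W.ι φ))
        + lTensor C (W.m ∘ₗ TensorProduct.mk A C C (W.ι φ))) (W.Δ y) := by
  rw [W.mul_compat_apply]
  simp only [TensorProduct.map_tmul, W.Δ_ι]
  induction W.Δ y using TensorProduct.induction_on with
  | zero => simp
  | tmul a b =>
      simp [add_tmul, tmul_add, TensorProduct.tensorTensorTensorComm_tmul, W.one_mul]
  | add u v hu hv =>
      simp only [tmul_add, map_add, hu, hv]

/-- The key step: `Δ ∘ (m ∘ (ι f ⊗ 1))` in terms of the comultiplied second leg. -/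
lemma Δ_comp_mulLift (f : C →ₗ[A] Φ) :
    W.Δ ∘ₗ (W.m ∘ₗ rTensor C (W.ι ∘ₗ f)) =
      (rTensor C (W.m ∘ₗ rTensor C (W.ι ∘ₗ f)) ∘ₗ (TensorProduct.assoc A C C C).symm.toLinearMap
        + lTensor C (W.m ∘ₗ rTensor C (W.ι ∘ₗ f)) ∘ₗ (TensorProduct.leftComm A C C C).toLinearMap)
        ∘ₗ lTensor C W.Δ := by
  apply TensorProduct.ext'
  intro x y
  simp only [comp_apply, rTensor_tmul, lTensor_tmul]
  rw [W.Δ_mulι (f x) y]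
  induction W.Δ y using TensorProduct.induction_on with
  | zero => simp
  | tmul a b =>
      simp [TensorProduct.assoc_symm_tmul, TensorProduct.leftComm_tmul]
  | add u v hu hv =>
      simp only [map_add, tmul_add, hu, hv]

lemma leftComm_apply_Δ (x : C) :
    (TensorProduct.leftComm A C C C) (lTensor C W.Δ (W.Δ x)) = lTensor C W.Δ (W.Δ x) := by
  have key : ∀ t : (C ⊗[A] C) ⊗[A] C,
      (TensorProduct.leftComm A C C C) ((TensorProduct.assoc A C C C) t)
        = (TensorProduct.assoc A C C C)
            (rTensor C (TensorProduct.comm A C C).toLinearMap t) := by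
    intro t
    induction t using TensorProduct.induction_on with
    | zero => simp
    | tmul u c =>
        induction u using TensorProduct.induction_on with
        | zero => simp
        | tmul a b => simp [TensorProduct.leftComm_tmul]
        | add p q hp hq => simp_all [add_tmul]
    | add p q hp hq => simp_all
  have hc : rTensor C (TensorProduct.comm A C C).toLinearMap (rTensor C W.Δ (W.Δ x))
      = rTensor C W.Δ (W.Δ x) := by
    rw [← comp_apply, ← rTensor_comp, W.cocomm]
  calc (TensorProduct.leftComm A C C C) (lTensor C W.Δ (W.Δ x))
      = (TensorProduct.leftComm A C C C)
          ((TensorProduct.assoc A C C C) (rTensor C W.Δ (W.Δ x))) := by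
        rw [W.coassoc_apply]
    _ = (TensorProduct.assoc A C C C)
          (rTensor C (TensorProduct.comm A C C).toLinearMap (rTensor C W.Δ (W.Δ x))) := key _
    _ = (TensorProduct.assoc A C C C) (rTensor C W.Δ (W.Δ x)) := by rw [hc]
    _ = lTensor C W.Δ (W.Δ x) := W.coassoc_apply x

/-- `coderOf f` is a coderivation. -/
lemma isCoderivation_coderOf (f : C →ₗ[A] Φ) : IsCoderivation W.Δ (W.coderOf f) := by
  unfold IsCoderivation
  ext x
  have h := LinearMap.congr_fun (W.Δ_comp_mulLift f) (W.Δ x)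
  simp only [comp_apply, LinearMap.add_apply, LinearEquiv.coe_coe] at h ⊢
  simp only [coderOf, comp_apply]
  rw [h, W.leftComm_apply_Δ, ← W.coassoc_symm_apply]
  have h1 : rTensor C (W.m ∘ₗ rTensor C (W.ι ∘ₗ f)) (rTensor C W.Δ (W.Δ x))
      = rTensor C (W.coderOf f) (W.Δ x) := by
    rw [← comp_apply, ← rTensor_comp]
    rfl
  have h2 : lTensor C (W.m ∘ₗ rTensor C (W.ι ∘ₗ f)) (lTensor C W.Δ (W.Δ x))
      = lTensor C (W.coderOf f) (W.Δ x) := by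
    rw [← comp_apply, ← lTensor_comp]
    rfl
  rw [h1, h2]
  rfl

/-- The corestriction of `coderOf f` is `f`. -/
lemma p_comp_coderOf (f : C →ₗ[A] Φ) : W.p ∘ₗ W.coderOf f = f := by
  ext x
  have key : ∀ t : C ⊗[A] C, W.p (W.m (rTensor C (W.ι ∘ₗ f) t))
      = f ((TensorProduct.rid A C) (lTensor C W.ε t)) := by
    intro t
    induction t using TensorProduct.induction_on with
    | zero => simp
    | tmul a b => simp [W.p_mul, W.ε_ι, W.p_ι]
    | add u v hu hv => simp only [map_add, hu, hv]
  simp only [coderOf, comp_apply]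
  rw [key (W.Δ x), W.counit_right]

lemma coderOf_sub (f g : C →ₗ[A] Φ) : W.coderOf (f - g) = W.coderOf f - W.coderOf g := by
  ext x
  have : W.ι ∘ₗ (f - g) = W.ι ∘ₗ f - W.ι ∘ₗ g := by ext y; simp
  simp [coderOf, this, rTensor_sub]

lemma isCoderivation_sub {Θ₁ Θ₂ : C →ₗ[A] C} (h₁ : IsCoderivation W.Δ Θ₁)
    (h₂ : IsCoderivation W.Δ Θ₂) : IsCoderivation W.Δ (Θ₁ - Θ₂) := by
  unfold IsCoderivation at *
  rw [comp_sub, h₁, h₂, rTensor_sub, lTensor_sub]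
  ext x
  simp only [comp_apply, LinearMap.add_apply, LinearMap.sub_apply]
  abel

lemma isCoderivation_commutator {Θ₁ Θ₂ : C →ₗ[A] C} (h₁ : IsCoderivation W.Δ Θ₁)
    (h₂ : IsCoderivation W.Δ Θ₂) :
    IsCoderivation W.Δ (Θ₁ ∘ₗ Θ₂ - Θ₂ ∘ₗ Θ₁) := by
  unfold IsCoderivation at *
  ext x
  have e1 := LinearMap.congr_fun h₁ (Θ₂ x)
  have e2 := LinearMap.congr_fun h₂ (Θ₁ x)
  have d1 := LinearMap.congr_fun h₁ x
  have d2 := LinearMap.congr_fun h₂ x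
  simp only [comp_apply, LinearMap.add_apply] at e1 e2 d1 d2
  have rr : ∀ (S T : C →ₗ[A] C) (t : C ⊗[A] C),
      rTensor C S (rTensor C T t) = rTensor C (S ∘ₗ T) t := by
    intro S T t; rw [rTensor_comp, comp_apply]
  have ll : ∀ (S T : C →ₗ[A] C) (t : C ⊗[A] C),
      lTensor C S (lTensor C T t) = lTensor C (S ∘ₗ T) t := by
    intro S T t; rw [lTensor_comp, comp_apply]
  have rl : ∀ (S T : C →ₗ[A] C) (t : C ⊗[A] C),
      rTensor C S (lTensor C T t) = lTensor C T (rTensor C S t) := by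
    intro S T t
    rw [← comp_apply, ← comp_apply, rTensor_comp_lTensor, lTensor_comp_rTensor]
  simp only [comp_apply, LinearMap.sub_apply, map_sub, LinearMap.add_apply, rTensor_sub, lTensor_sub]
  rw [e1, e2, d1, d2]
  simp only [map_add, rr, ll, rl]
  abel

lemma coderOf_gbracket (f g : C →ₗ[A] Φ) :
    W.coderOf (W.gbracket f g) = W.coderOf f ∘ₗ W.coderOf g - W.coderOf g ∘ₗ W.coderOf f := by
  have hz := W.cofree_coder
      (W.coderOf (W.gbracket f g) - (W.coderOf f ∘ₗ W.coderOf g - W.coderOf g ∘ₗ W.coderOf f))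
      (W.isCoderivation_sub (W.isCoderivation_coderOf _)
        (W.isCoderivation_commutator (W.isCoderivation_coderOf f) (W.isCoderivation_coderOf g)))
      (by
        rw [comp_sub, comp_sub, W.p_comp_coderOf, ← comp_assoc, ← comp_assoc,
          W.p_comp_coderOf, W.p_comp_coderOf]
        simp [WedgeBialgebra.gbracket, WedgeBialgebra.gcomp])
  exact sub_eq_zero.mp hz

/-- Jacobi identity for the Gerstenhaber bracket. -/
lemma gbracket_jacobi (f g h : C →ₗ[A] Φ) :
    W.gbracket (W.gbracket f g) h + W.gbracket (W.gbracket g h) f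
      + W.gbracket (W.gbracket h f) g = 0 := by
  have E : ∀ u v : C →ₗ[A] Φ, W.gbracket u v = u ∘ₗ W.coderOf v - v ∘ₗ W.coderOf u :=
    fun _ _ => rfl
  rw [E (W.gbracket f g) h, E (W.gbracket g h) f, E (W.gbracket h f) g,
    W.coderOf_gbracket, W.coderOf_gbracket, W.coderOf_gbracket, E f g, E g h, E h f]
  simp only [LinearMap.sub_comp, LinearMap.comp_sub, LinearMap.comp_assoc]
  abel

lemma deltaHat_zero (δ : Ξ →ₗ[A] (C →ₗ[A] Φ)) : W.deltaHat δ 0 = 0 := by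
  unfold WedgeBialgebra.deltaHat
  have h1 : δ ∘ₗ (0 : C →ₗ[A] Ξ) = 0 := by ext y; simp
  have h2 : TensorProduct.lift (0 : C →ₗ[A] C →ₗ[A] Φ) = 0 := by
    apply TensorProduct.ext'; intro a b; simp
  rw [h1, h2, zero_comp]

lemma deltaHat_add (δ : Ξ →ₗ[A] (C →ₗ[A] Φ)) (π π' : C →ₗ[A] Ξ) :
    W.deltaHat δ (π + π') = W.deltaHat δ π + W.deltaHat δ π' := by
  ext x
  have : δ ∘ₗ (π + π') = δ ∘ₗ π + δ ∘ₗ π' := by ext y; simp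
  have h2 : TensorProduct.lift (δ ∘ₗ π + δ ∘ₗ π')
      = TensorProduct.lift (δ ∘ₗ π) + TensorProduct.lift (δ ∘ₗ π') := by
    apply TensorProduct.ext'; intro a b; simp
  simp [WedgeBialgebra.deltaHat, this, h2]

lemma deltaHat_sub (δ : Ξ →ₗ[A] (C →ₗ[A] Φ)) (π π' : C →ₗ[A] Ξ) :
    W.deltaHat δ (π - π') = W.deltaHat δ π - W.deltaHat δ π' := by
  ext x
  have : δ ∘ₗ (π - π') = δ ∘ₗ π - δ ∘ₗ π' := by ext y; simp
  have h2 : TensorProduct.lift (δ ∘ₗ π - δ ∘ₗ π')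
      = TensorProduct.lift (δ ∘ₗ π) - TensorProduct.lift (δ ∘ₗ π') := by
    apply TensorProduct.ext'; intro a b; simp
  simp [WedgeBialgebra.deltaHat, this, h2]

/-- `δ̂(π ∘ X) = δ̂(π) ∘ X − (x ↦ Σ δ(π x₁)(X x₂))` for a coderivation `X`. -/
lemma deltaHat_comp (δ : Ξ →ₗ[A] (C →ₗ[A] Φ)) (π : C →ₗ[A] Ξ) (X : C →ₗ[A] C)
    (hX : IsCoderivation W.Δ X) :
    W.deltaHat δ (π ∘ₗ X) =
      W.deltaHat δ π ∘ₗ X - TensorProduct.lift ((δ ∘ₗ π).compl₂ X) ∘ₗ W.Δ := by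
  unfold WedgeBialgebra.deltaHat
  ext x
  simp only [comp_apply, LinearMap.sub_apply]
  have h1 : (δ ∘ₗ (π ∘ₗ X)) = (δ ∘ₗ π) ∘ₗ X := by rw [comp_assoc]
  rw [h1]
  have h2 : TensorProduct.lift ((δ ∘ₗ π) ∘ₗ X) (W.Δ x)
      = TensorProduct.lift (δ ∘ₗ π) (rTensor C X (W.Δ x)) := by
    rw [← lift_comp_rT, comp_apply]
  rw [h2]
  have h3 := LinearMap.congr_fun hX x
  simp only [comp_apply, LinearMap.add_apply] at h3
  have h4 : rTensor C X (W.Δ x) = W.Δ (X x) - lTensor C X (W.Δ x) := by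
    rw [h3]; abel
  rw [h4, map_sub]
  have h5 : TensorProduct.lift (δ ∘ₗ π) (lTensor C X (W.Δ x))
      = TensorProduct.lift ((δ ∘ₗ π).compl₂ X) (W.Δ x) := by
    rw [← lift_comp_lT, comp_apply]
  rw [h5]

/-- The iterated comultiplication `(Δ ⊗ 1) ∘ Δ`. -/
noncomputable def bigDelta : C →ₗ[A] (C ⊗[A] C) ⊗[A] C := rTensor C W.Δ ∘ₗ W.Δ

/-- The map `(a⊗b)⊗c ↦ m(ι(δ(π)(a⊗b)) ⊗ c)` used to express `coderOf (δ̂ π)`. -/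
noncomputable def PsiMap (δ : Ξ →ₗ[A] (C →ₗ[A] Φ)) (π : C →ₗ[A] Ξ) :
    (C ⊗[A] C) ⊗[A] C →ₗ[A] C :=
  W.m ∘ₗ rTensor C (W.ι ∘ₗ TensorProduct.lift (δ ∘ₗ π))

lemma coderOf_deltaHat (δ : Ξ →ₗ[A] (C →ₗ[A] Φ)) (π : C →ₗ[A] Ξ) :
    W.coderOf (W.deltaHat δ π) = W.PsiMap δ π ∘ₗ W.bigDelta := by
  ext x
  simp only [coderOf, deltaHat, PsiMap, bigDelta, comp_apply]
  congr 1
  have h1 : W.ι ∘ₗ (TensorProduct.lift (δ ∘ₗ π) ∘ₗ W.Δ)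
      = (W.ι ∘ₗ TensorProduct.lift (δ ∘ₗ π)) ∘ₗ W.Δ := by rw [comp_assoc]
  rw [h1, rTensor_comp, comp_apply]

lemma nat1 : rTensor C (rTensor C W.Δ) ∘ₗ (TensorProduct.assoc A C C C).symm.toLinearMap
    = (TensorProduct.assoc A (C ⊗[A] C) C C).symm.toLinearMap ∘ₗ rTensor (C ⊗[A] C) W.Δ := by
  apply TensorProduct.ext'
  intro x t
  induction t using TensorProduct.induction_on with
  | zero => simp
  | tmul y z => simp
  | add u v hu hv => simp_all [tmul_add]

lemma nat2 : lTensor (C ⊗[A] C) W.Δ ∘ₗ (TensorProduct.assoc A C C C).symm.toLinearMap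
    = (TensorProduct.assoc A C C (C ⊗[A] C)).symm.toLinearMap ∘ₗ lTensor C (lTensor C W.Δ) := by
  apply TensorProduct.ext'
  intro x t
  induction t using TensorProduct.induction_on with
  | zero => simp
  | tmul y z => simp
  | add u v hu hv => simp_all [tmul_add]

lemma chain1 (x : C) :
    rTensor C W.bigDelta (W.Δ x) =
      (TensorProduct.assoc A (C ⊗[A] C) C C).symm
        (lTensor (C ⊗[A] C) W.Δ (W.bigDelta x)) := by
  have l1 : rTensor C W.bigDelta (W.Δ x)
      = rTensor C (rTensor C W.Δ) (rTensor C W.Δ (W.Δ x)) := by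
    rw [bigDelta, rTensor_comp, comp_apply]
  rw [l1, W.coassoc_symm_apply]
  have l2 := LinearMap.congr_fun W.nat1 (lTensor C W.Δ (W.Δ x))
  simp only [comp_apply, LinearEquiv.coe_coe] at l2
  rw [l2]
  have l3 : rTensor (C ⊗[A] C) W.Δ (lTensor C W.Δ (W.Δ x))
      = TensorProduct.map W.Δ W.Δ (W.Δ x) := by
    rw [← comp_apply, rTensor_comp_lTensor]
  have l4 : lTensor (C ⊗[A] C) W.Δ (W.bigDelta x)
      = TensorProduct.map W.Δ W.Δ (W.Δ x) := by
    rw [bigDelta, comp_apply, ← comp_apply (lTensor (C ⊗[A] C) W.Δ), lTensor_comp_rTensor]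
  rw [l3, l4]

lemma chain2 (x : C) :
    (lTensor C (TensorProduct.assoc A C C C).symm.toLinearMap)
      ((TensorProduct.assoc A C C (C ⊗[A] C))
        (lTensor (C ⊗[A] C) W.Δ (W.bigDelta x)))
      = lTensor C W.bigDelta (W.Δ x) := by
  -- right side
  have r1 : lTensor C W.bigDelta (W.Δ x)
      = lTensor C (rTensor C W.Δ) (lTensor C W.Δ (W.Δ x)) := by
    rw [bigDelta, lTensor_comp, comp_apply]
  -- left side
  have l1 : W.bigDelta x
      = (TensorProduct.assoc A C C C).symm (lTensor C W.Δ (W.Δ x)) := by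
    rw [bigDelta, comp_apply, W.coassoc_symm_apply]
  rw [l1]
  have l2 := LinearMap.congr_fun W.nat2 (lTensor C W.Δ (W.Δ x))
  simp only [comp_apply, LinearEquiv.coe_coe] at l2
  rw [l2]
  have l3 : lTensor C (lTensor C W.Δ) (lTensor C W.Δ (W.Δ x))
      = lTensor C (lTensor C W.Δ ∘ₗ W.Δ) (W.Δ x) := by
    rw [lTensor_comp, comp_apply]
  rw [l3]
  have l4 : lTensor C W.Δ ∘ₗ W.Δ
      = (TensorProduct.assoc A C C C).toLinearMap ∘ₗ (rTensor C W.Δ ∘ₗ W.Δ) := by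
    ext y
    simp only [comp_apply, LinearEquiv.coe_coe]
    rw [W.coassoc_apply]
  rw [l4]
  have l5 : lTensor C ((TensorProduct.assoc A C C C).toLinearMap ∘ₗ (rTensor C W.Δ ∘ₗ W.Δ)) (W.Δ x)
      = lTensor C (TensorProduct.assoc A C C C).toLinearMap
          (lTensor C W.bigDelta (W.Δ x)) := by
    rw [lTensor_comp, comp_apply]; rfl
  rw [l5]
  -- now cancel: asR (asR.symm _) and lT assoc.symm (lT assoc _)
  rw [LinearEquiv.apply_symm_apply]
  rw [← comp_apply, ← lTensor_comp]
  have : (TensorProduct.assoc A C C C).symm.toLinearMap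
      ∘ₗ (TensorProduct.assoc A C C C).toLinearMap = LinearMap.id := by
    ext t; simp
  rw [this, lTensor_id, id_apply]

/-- The BBvD identity at the level of fourfold tensors. -/
lemma keyE (δ : Ξ →ₗ[A] (C →ₗ[A] Φ)) (Cm : Ξ →ₗ[A] Ξ →ₗ[A] (C →ₗ[A] Ξ))
    (hBBvD : ∀ ξ η : Ξ, W.gbracket (δ ξ) (δ η) = W.deltaHat δ (Cm ξ η))
    (π₁ π₂ : C →ₗ[A] Ξ) :
    TensorProduct.lift (δ ∘ₗ TensorProduct.lift (TensorProduct.lift ((Cm ∘ₗ π₁).compl₂ π₂)))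
        ∘ₗ (TensorProduct.assoc A (C ⊗[A] C) C C).symm.toLinearMap
        ∘ₗ lTensor (C ⊗[A] C) W.Δ
      = (TensorProduct.lift (δ ∘ₗ π₁) ∘ₗ lTensor C (W.PsiMap δ π₂))
          ∘ₗ (lTensor C (TensorProduct.assoc A C C C).symm.toLinearMap
              ∘ₗ (TensorProduct.assoc A C C (C ⊗[A] C)).toLinearMap)
          ∘ₗ lTensor (C ⊗[A] C) W.Δ
        - (TensorProduct.lift (δ ∘ₗ π₂) ∘ₗ lTensor C (W.PsiMap δ π₁))
          ∘ₗ (lTensor C (TensorProduct.assoc A C C C).symm.toLinearMap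
              ∘ₗ (TensorProduct.assoc A C C (C ⊗[A] C)).toLinearMap)
          ∘ₗ rTensor (C ⊗[A] C) (TensorProduct.comm A C C).toLinearMap
          ∘ₗ lTensor (C ⊗[A] C) W.Δ := by
  apply TensorProduct.ext_threefold
  intro a b c
  have claim1 : ∀ t : C ⊗[A] C,
      TensorProduct.lift (δ ∘ₗ TensorProduct.lift (TensorProduct.lift ((Cm ∘ₗ π₁).compl₂ π₂)))
        ((TensorProduct.assoc A (C ⊗[A] C) C C).symm ((a ⊗ₜ b) ⊗ₜ t))
      = TensorProduct.lift (δ ∘ₗ Cm (π₁ a) (π₂ b)) t := by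
    intro t
    induction t using TensorProduct.induction_on with
    | zero => simp
    | tmul u v => simp
    | add u v hu hv => simp_all [tmul_add]
  have claim2 : ∀ t : C ⊗[A] C,
      TensorProduct.lift (δ ∘ₗ π₁) (lTensor C (W.PsiMap δ π₂)
        ((lTensor C (TensorProduct.assoc A C C C).symm.toLinearMap)
          ((TensorProduct.assoc A C C (C ⊗[A] C)) ((a ⊗ₜ b) ⊗ₜ t))))
      = δ (π₁ a) (W.m (rTensor C (W.ι ∘ₗ δ (π₂ b)) t)) := by
    intro t
    induction t using TensorProduct.induction_on with
    | zero => simp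
    | tmul u v => simp [PsiMap]
    | add u v hu hv => simp_all [tmul_add]
  have claim3 : ∀ t : C ⊗[A] C,
      TensorProduct.lift (δ ∘ₗ π₂) (lTensor C (W.PsiMap δ π₁)
        ((lTensor C (TensorProduct.assoc A C C C).symm.toLinearMap)
          ((TensorProduct.assoc A C C (C ⊗[A] C))
            (rTensor (C ⊗[A] C) (TensorProduct.comm A C C).toLinearMap ((a ⊗ₜ b) ⊗ₜ t)))))
      = δ (π₂ b) (W.m (rTensor C (W.ι ∘ₗ δ (π₁ a)) t)) := by
    intro t
    induction t using TensorProduct.induction_on with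
    | zero => simp
    | tmul u v => simp [PsiMap]
    | add u v hu hv => simp_all [tmul_add]
  simp only [comp_apply, LinearMap.sub_apply, lTensor_tmul, LinearEquiv.coe_coe]
  rw [claim1, claim2, claim3]
  have h := LinearMap.congr_fun (hBBvD (π₁ a) (π₂ b)) c
  simp only [gbracket, gcomp, deltaHat, coderOf, LinearMap.sub_apply, comp_apply] at h
  exact h.symm

/-- `δ̂(Ĉ(π₁,π₂)) = T(π₁, X₂) − T(π₂, X₁)`. -/
lemma deltaHat_cHat (δ : Ξ →ₗ[A] (C →ₗ[A] Φ)) (Cm : Ξ →ₗ[A] Ξ →ₗ[A] (C →ₗ[A] Ξ))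
    (hBBvD : ∀ ξ η : Ξ, W.gbracket (δ ξ) (δ η) = W.deltaHat δ (Cm ξ η))
    (π₁ π₂ : C →ₗ[A] Ξ) :
    W.deltaHat δ (W.cHat Cm π₁ π₂) =
      TensorProduct.lift ((δ ∘ₗ π₁).compl₂ (W.coderOf (W.deltaHat δ π₂))) ∘ₗ W.Δ
      - TensorProduct.lift ((δ ∘ₗ π₂).compl₂ (W.coderOf (W.deltaHat δ π₁))) ∘ₗ W.Δ := by
  ext x
  simp only [deltaHat, comp_apply, LinearMap.sub_apply]
  -- step 0: reorganize lift (δ ∘ cHat) (Δ x)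
  have e0 : δ ∘ₗ W.cHat Cm π₁ π₂
      = (δ ∘ₗ TensorProduct.lift (TensorProduct.lift ((Cm ∘ₗ π₁).compl₂ π₂))) ∘ₗ W.bigDelta := by
    unfold WedgeBialgebra.cHat bigDelta
    rw [comp_assoc]
  rw [e0, ← lift_comp_rT, comp_apply]
  -- step 1: chain1
  rw [W.chain1 x]
  -- step 2: keyE applied at bigDelta x
  have hk := LinearMap.congr_fun (W.keyE δ Cm hBBvD π₁ π₂) (W.bigDelta x)
  simp only [comp_apply, LinearMap.sub_apply, LinearEquiv.coe_coe] at hk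
  rw [hk]
  -- step 3: in the second term, push comm through and use cocommutativity
  have hcomm : rTensor (C ⊗[A] C) (TensorProduct.comm A C C).toLinearMap
        (lTensor (C ⊗[A] C) W.Δ (W.bigDelta x))
      = lTensor (C ⊗[A] C) W.Δ (W.bigDelta x) := by
    rw [← comp_apply, rTensor_comp_lTensor, ← lTensor_comp_rTensor, comp_apply]
    have : rTensor C (TensorProduct.comm A C C).toLinearMap (W.bigDelta x) = W.bigDelta x := by
      rw [bigDelta, comp_apply, ← comp_apply (rTensor C (TensorProduct.comm A C C).toLinearMap),
        ← rTensor_comp, W.cocomm]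
    rw [this]
  rw [hcomm]
  -- step 4: chain2
  have hc2 := W.chain2 x
  rw [hc2]
  -- step 5: identify with the compl₂ lifts
  have final : ∀ (π π' : C →ₗ[A] Ξ),
      TensorProduct.lift (δ ∘ₗ π) (lTensor C (W.PsiMap δ π') (lTensor C W.bigDelta (W.Δ x)))
      = TensorProduct.lift ((δ ∘ₗ π).compl₂ (W.coderOf (W.deltaHat δ π'))) (W.Δ x) := by
    intro π π'
    rw [← comp_apply (lTensor C (W.PsiMap δ π')), ← lTensor_comp,
      ← W.coderOf_deltaHat δ π', ← lift_comp_lT, comp_apply]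
  rw [final π₁ π₂, final π₂ π₁]
  rfl

/-- `δ̂` intertwines the corrected bracket with the Gerstenhaber bracket. -/
lemma deltaHat_parBracket (δ : Ξ →ₗ[A] (C →ₗ[A] Φ)) (Cm : Ξ →ₗ[A] Ξ →ₗ[A] (C →ₗ[A] Ξ))
    (hBBvD : ∀ ξ η : Ξ, W.gbracket (δ ξ) (δ η) = W.deltaHat δ (Cm ξ η))
    (π₁ π₂ : C →ₗ[A] Ξ) :
    W.deltaHat δ (W.parBracket δ Cm π₁ π₂)
      = W.gbracket (W.deltaHat δ π₁) (W.deltaHat δ π₂) := by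
  unfold WedgeBialgebra.parBracket
  rw [W.deltaHat_add, W.deltaHat_sub,
    W.deltaHat_comp δ π₁ _ (W.isCoderivation_coderOf _),
    W.deltaHat_comp δ π₂ _ (W.isCoderivation_coderOf _),
    W.deltaHat_cHat δ Cm hBBvD π₁ π₂]
  show _ = W.deltaHat δ π₁ ∘ₗ W.coderOf (W.deltaHat δ π₂)
      - W.deltaHat δ π₂ ∘ₗ W.coderOf (W.deltaHat δ π₁)
  abel

end WedgeBialgebra

end AuxiliaryLemmas

variable {A Φ C Ξ : Type*} [CommRing A] [AddCommGroup Φ] [Module A Φ]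
  [AddCommGroup C] [Module A C] [AddCommGroup Ξ] [Module A Ξ]

/-- Under the BBvD hypothesis, if `δ̂` is injective then the corrected
bracket on `Hom(Λ*Φ, Ξ)` satisfies the Jacobi identity. -/
theorem parBracket_jacobi_of_injective (W : WedgeBialgebra A Φ C)
    (δ : Ξ →ₗ[A] (C →ₗ[A] Φ)) (Cm : Ξ →ₗ[A] Ξ →ₗ[A] (C →ₗ[A] Ξ))
    (hBBvD : ∀ ξ η : Ξ, W.gbracket (δ ξ) (δ η) = W.deltaHat δ (Cm ξ η))
    (hinj : Function.Injective (W.deltaHat δ)) :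
    ∀ π₁ π₂ π₃ : C →ₗ[A] Ξ,
      W.parBracket δ Cm (W.parBracket δ Cm π₁ π₂) π₃ +
      W.parBracket δ Cm (W.parBracket δ Cm π₂ π₃) π₁ +
      W.parBracket δ Cm (W.parBracket δ Cm π₃ π₁) π₂ = 0 := by
  intro π₁ π₂ π₃
  apply hinj
  rw [W.deltaHat_zero δ, W.deltaHat_add, W.deltaHat_add,
    W.deltaHat_parBracket δ Cm hBBvD, W.deltaHat_parBracket δ Cm hBBvD,
    W.deltaHat_parBracket δ Cm hBBvD, W.deltaHat_parBracket δ Cm hBBvD,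
    W.deltaHat_parBracket δ Cm hBBvD, W.deltaHat_parBracket δ Cm hBBvD]
  exact W.gbracket_jacobi _ _ _
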